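/- arXiv:1207.5642 — 2 statements merged into one kernel-verified Lean document; each statement's English description precedes it below -/
import Mathlib

section
/- Suppose A ∈ ℝ^{n×n} and there exist symmetric positive definite matrices P, Q with AᵀP + PA = −Q. Let x, a be differentiable functions with values in ℝⁿ and ℝ^{n+1} satisfying x' = A x − (1/aₙ) b v(τ)ᵀ a and a' = (qₙ/(2aₙ)) C v(τ) qᵀ x, where v : ℝ → ℝ^{n+1} is continuous and the matrix identity qₙ Γ C w qᵀ = w bᵀ P holds for all w ∈ ℝ^{n+1}, Γ symmetric positive definite. Then V(τ) = x(τ)ᵀPx(τ) + 2a(τ)ᵀΓa(τ) is nonincreasing, and consequently x and a are bounded on [0, ∞). -/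
open Matrix Set

lemma hasDerivAt_quad {m : ℕ} (M : Matrix (Fin m) (Fin m) ℝ)
    (x : ℝ → Fin m → ℝ) (x' : Fin m → ℝ) (τ : ℝ) (h : HasDerivAt x x' τ) :
    HasDerivAt (fun t => x t ⬝ᵥ M.mulVec (x t))
      (x' ⬝ᵥ M.mulVec (x τ) + x τ ⬝ᵥ M.mulVec x') τ := by
  have hc : ∀ i, HasDerivAt (fun t => x t i) (x' i) τ := fun i => (hasDerivAt_pi.1 h) i
  simp only [dotProduct, mulVec]
  have : HasDerivAt (fun t => ∑ i, x t i * ∑ j, M i j * x t j)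
      (∑ i, (x' i * ∑ j, M i j * x τ j + x τ i * ∑ j, M i j * x' j)) τ := by
    apply HasDerivAt.fun_sum
    intro i _
    exact (hc i).mul (HasDerivAt.fun_sum fun j _ => (hc j).const_mul (M i j))
  simpa [Finset.sum_add_distrib] using this

lemma continuous_quad {m : ℕ} (P : Matrix (Fin m) (Fin m) ℝ) :
    Continuous fun y : Fin m → ℝ => y ⬝ᵥ P.mulVec y := by
  simp only [dotProduct, mulVec]
  exact continuous_finset_sum _ fun i _ => (continuous_apply i).mul
    (continuous_finset_sum _ fun j _ => continuous_const.mul (continuous_apply j))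

lemma posdef_lower {m : ℕ} (P : Matrix (Fin m) (Fin m) ℝ) (hP : P.PosDef) :
    ∃ c > 0, ∀ x : Fin m → ℝ, c * ‖x‖ ^ 2 ≤ x ⬝ᵥ P.mulVec x := by
  rcases Nat.eq_zero_or_pos m with hm | hm
  · subst hm
    refine ⟨1, one_pos, fun x => ?_⟩
    have hx : x = 0 := funext fun i => i.elim0
    have h1 : ‖x‖ = 0 := by rw [hx]; simp
    have h2 : x ⬝ᵥ P.mulVec x = 0 := by simp [hx]
    rw [h1, h2]; norm_num
  · haveI : Nonempty (Fin m) := ⟨⟨0, hm⟩⟩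
    have hne : (Metric.sphere (0 : Fin m → ℝ) 1).Nonempty :=
      NormedSpace.sphere_nonempty.2 one_pos.le
    obtain ⟨y0, hy0mem, hy0min⟩ :=
      (isCompact_sphere (0 : Fin m → ℝ) 1).exists_isMinOn hne (continuous_quad P).continuousOn
    have hy0norm : ‖y0‖ = 1 := mem_sphere_zero_iff_norm.1 hy0mem
    have hy0ne : y0 ≠ 0 := by intro h; rw [h] at hy0norm; simp at hy0norm
    have hc : 0 < y0 ⬝ᵥ P.mulVec y0 := by
      have := hP.dotProduct_mulVec_pos hy0ne
      simpa using this
    refine ⟨_, hc, fun x => ?_⟩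
    rcases eq_or_ne x 0 with rfl | hx
    · simp
    · set t := ‖x‖ with ht
      have htpos : 0 < t := norm_pos_iff.2 hx
      have hy : t⁻¹ • x ∈ Metric.sphere (0 : Fin m → ℝ) 1 := by
        rw [mem_sphere_zero_iff_norm, norm_smul, norm_inv, norm_norm]
        field_simp
      have hmin := hy0min hy
      have hxy : x = t • (t⁻¹ • x) := by
        rw [smul_smul, mul_inv_cancel₀ htpos.ne', one_smul]
      calc (y0 ⬝ᵥ P.mulVec y0) * ‖x‖ ^ 2
          ≤ ((t⁻¹ • x) ⬝ᵥ P.mulVec (t⁻¹ • x)) * ‖x‖ ^ 2 := by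
            apply mul_le_mul_of_nonneg_right hmin (by positivity)
        _ = x ⬝ᵥ P.mulVec x := by
            rw [hxy]
            simp only [smul_smul, mul_inv_cancel₀ htpos.ne', one_smul,
              smul_dotProduct, mulVec_smul, dotProduct_smul, smul_eq_mul]
            ring_nf
            rw [← ht]
            field_simp

lemma dot_vecMulVec {k l : ℕ} (a u : Fin k → ℝ) (w X : Fin l → ℝ) :
    a ⬝ᵥ (vecMulVec u w) *ᵥ X = (a ⬝ᵥ u) * (w ⬝ᵥ X) := by
  simp only [dotProduct, mulVec, vecMulVec_apply, Finset.mul_sum, Finset.sum_mul]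
  rw [Finset.sum_comm]
  apply Finset.sum_congr rfl; intro j _
  apply Finset.sum_congr rfl; intro i _
  ring

lemma sym_dot {k : ℕ} (P : Matrix (Fin k) (Fin k) ℝ) (hP : Pᵀ = P) (u w : Fin k → ℝ) :
    u ⬝ᵥ P *ᵥ w = w ⬝ᵥ P *ᵥ u := by
  rw [dotProduct_mulVec u P w, dotProduct_comm]
  congr 1
  rw [← hP, vecMul_transpose, hP]

lemma algebra_key {n : ℕ} (A P Q : Matrix (Fin n) (Fin n) ℝ) (hPs : Pᵀ = P)
    (hLyap : Aᵀ * P + P * A = -Q)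
    (Γ C : Matrix (Fin (n+1)) (Fin (n+1)) ℝ) (hΓs : Γᵀ = Γ)
    (b q : Fin n → ℝ) (aN qN : ℝ) (haN : aN ≠ 0)
    (vτ aτ : Fin (n+1) → ℝ) (X : Fin n → ℝ)
    (hd : qN • vecMulVec ((Γ * C).mulVec vτ) q = vecMulVec vτ (b ᵥ* P)) :
    ((A.mulVec X - (1/aN) • ((vτ ⬝ᵥ aτ) • b)) ⬝ᵥ P.mulVec X
      + X ⬝ᵥ P.mulVec (A.mulVec X - (1/aN) • ((vτ ⬝ᵥ aτ) • b)))
    + 2 * (((qN/(2*aN)) • ((q ⬝ᵥ X) • C.mulVec vτ)) ⬝ᵥ Γ.mulVec aτ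
      + aτ ⬝ᵥ Γ.mulVec ((qN/(2*aN)) • ((q ⬝ᵥ X) • C.mulVec vτ)))
    = -(X ⬝ᵥ Q.mulVec X) := by
  have F1 : (A *ᵥ X) ⬝ᵥ P *ᵥ X = X ⬝ᵥ (Aᵀ*P) *ᵥ X := by
    rw [← mulVec_mulVec, dotProduct_mulVec X Aᵀ (P *ᵥ X), vecMul_transpose]
  have F2 : X ⬝ᵥ P *ᵥ (A *ᵥ X) = X ⬝ᵥ (P*A) *ᵥ X := by rw [mulVec_mulVec]
  have F3 : X ⬝ᵥ (Aᵀ*P) *ᵥ X + X ⬝ᵥ (P*A) *ᵥ X = -(X ⬝ᵥ Q *ᵥ X) := by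
    rw [← dotProduct_add, ← add_mulVec, hLyap, neg_mulVec, dotProduct_neg]
  have F4 : X ⬝ᵥ P *ᵥ b = b ⬝ᵥ P *ᵥ X := sym_dot P hPs X b
  have F5 : (C *ᵥ vτ) ⬝ᵥ Γ *ᵥ aτ = aτ ⬝ᵥ (Γ * C) *ᵥ vτ := by
    rw [sym_dot Γ hΓs _ _, mulVec_mulVec]
  have F6 : qN * ((aτ ⬝ᵥ (Γ * C) *ᵥ vτ) * (q ⬝ᵥ X)) = (vτ ⬝ᵥ aτ) * (b ⬝ᵥ P *ᵥ X) := by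
    have h := congrArg (fun M => aτ ⬝ᵥ M *ᵥ X) hd
    simp only [smul_mulVec, dotProduct_smul, dot_vecMulVec, smul_eq_mul] at h
    rw [h, dotProduct_comm aτ vτ, ← dotProduct_mulVec]
  simp only [sub_dotProduct, dotProduct_sub, Matrix.mulVec_sub, Matrix.mulVec_smul,
    smul_dotProduct, dotProduct_smul, smul_eq_mul, mulVec_mulVec]
  rw [F1]
  linear_combination F3 + (2/aN) * F6 - (1/aN) * (vτ ⬝ᵥ aτ) * F4 + (qN/aN) * (q ⬝ᵥ X) * F5

/-- Along the averaged closed-loop dynamics, with the design identity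
`qₙ Γ C w qᵀ = w bᵀ P`, the Lyapunov function `V = xᵀPx + 2aᵀΓa` is
nonincreasing on `[0,∞)`, and hence `x` and `a` are bounded there. -/
theorem lyapunov_nonincreasing_and_bounded (n : ℕ)
    (A P Q : Matrix (Fin n) (Fin n) ℝ)
    (hP : P.PosDef) (hQ : Q.PosDef) (hLyap : Aᵀ * P + P * A = -Q)
    (Γ C : Matrix (Fin (n + 1)) (Fin (n + 1)) ℝ) (hΓ : Γ.PosDef)
    (b q : Fin n → ℝ) (aN qN : ℝ) (haN : aN ≠ 0)
    (v : ℝ → Fin (n + 1) → ℝ) (hv : Continuous v)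
    (hdesign : ∀ w : Fin (n + 1) → ℝ,
      qN • vecMulVec ((Γ * C).mulVec w) q = vecMulVec w (b ᵥ* P))
    (x : ℝ → Fin n → ℝ) (a : ℝ → Fin (n + 1) → ℝ)
    (hx : ∀ τ ∈ Ici (0:ℝ),
      HasDerivAt x (A.mulVec (x τ) - (1 / aN) • ((v τ ⬝ᵥ a τ) • b)) τ)
    (ha : ∀ τ ∈ Ici (0:ℝ),
      HasDerivAt a ((qN / (2 * aN)) • ((q ⬝ᵥ x τ) • C.mulVec (v τ))) τ) :
    AntitoneOn (fun τ => x τ ⬝ᵥ P.mulVec (x τ) + 2 * (a τ ⬝ᵥ Γ.mulVec (a τ)))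
      (Ici (0:ℝ)) ∧
    ∃ M : ℝ, ∀ τ ∈ Ici (0:ℝ), ‖x τ‖ ≤ M ∧ ‖a τ‖ ≤ M := by
  set V : ℝ → ℝ := fun τ => x τ ⬝ᵥ P.mulVec (x τ) + 2 * (a τ ⬝ᵥ Γ.mulVec (a τ)) with hV
  have hPs : Pᵀ = P := hP.1
  have hΓs : Γᵀ = Γ := hΓ.1
  have hderiv : ∀ τ ∈ Ici (0:ℝ), HasDerivAt V (-(x τ ⬝ᵥ Q.mulVec (x τ))) τ := by
    intro τ hτ
    have h1 := hasDerivAt_quad P x _ τ (hx τ hτ)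
    have h2 := (hasDerivAt_quad Γ a _ τ (ha τ hτ)).const_mul 2
    have key := algebra_key A P Q hPs hLyap Γ C hΓs b q aN qN haN
      (v τ) (a τ) (x τ) (hdesign (v τ))
    have := h1.add h2
    rw [key] at this
    exact this
  have hQnn : ∀ y : Fin n → ℝ, 0 ≤ y ⬝ᵥ Q.mulVec y := by
    intro y
    have := hQ.posSemidef.dotProduct_mulVec_nonneg y
    simpa using this
  have hPnn : ∀ y : Fin n → ℝ, 0 ≤ y ⬝ᵥ P.mulVec y := by
    intro y; have := hP.posSemidef.dotProduct_mulVec_nonneg y; simpa using this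
  have hΓnn : ∀ y : Fin (n+1) → ℝ, 0 ≤ y ⬝ᵥ Γ.mulVec y := by
    intro y; have := hΓ.posSemidef.dotProduct_mulVec_nonneg y; simpa using this
  have hanti : AntitoneOn V (Ici (0:ℝ)) := by
    apply antitoneOn_of_deriv_nonpos (convex_Ici 0)
    · intro τ hτ
      exact (hderiv τ hτ).continuousAt.continuousWithinAt
    · intro τ hτ
      rw [interior_Ici] at hτ
      exact (hderiv τ (mem_Ici.2 (le_of_lt hτ))).differentiableAt.differentiableWithinAt
    · intro τ hτ
      rw [interior_Ici] at hτ
      rw [(hderiv τ (mem_Ici.2 (le_of_lt hτ))).deriv]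
      exact neg_nonpos.2 (hQnn _)
  refine ⟨hanti, ?_⟩
  obtain ⟨c1, hc1, hb1⟩ := posdef_lower P hP
  obtain ⟨c2, hc2, hb2⟩ := posdef_lower Γ hΓ
  have hV0 : ∀ τ ∈ Ici (0:ℝ), V τ ≤ V 0 := fun τ hτ => hanti self_mem_Ici hτ hτ
  have hV0nn : 0 ≤ V 0 := by
    have := hPnn (x 0); have := hΓnn (a 0); simp only [hV]; positivity
  refine ⟨max (Real.sqrt (V 0 / c1)) (Real.sqrt (V 0 / c2)), fun τ hτ => ?_⟩
  have hVτ := hV0 τ hτ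
  have hx2 : c1 * ‖x τ‖ ^ 2 ≤ V 0 := by
    have h1 := hb1 (x τ)
    have h2 : x τ ⬝ᵥ P.mulVec (x τ) ≤ V τ := by
      have := hΓnn (a τ); simp only [hV]; nlinarith
    linarith
  have ha2 : c2 * ‖a τ‖ ^ 2 ≤ V 0 := by
    have h1 := hb2 (a τ)
    have h2 : a τ ⬝ᵥ Γ.mulVec (a τ) ≤ V τ := by
      have := hPnn (x τ); simp only [hV]; nlinarith
    linarith
  constructor
  · refine le_trans ?_ (le_max_left _ _)
    rw [Real.le_sqrt (norm_nonneg _)]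
    · rw [le_div_iff₀ hc1]; linarith
    · positivity
  · refine le_trans ?_ (le_max_right _ _)
    rw [Real.le_sqrt (norm_nonneg _)]
    · rw [le_div_iff₀ hc2]; linarith
    · positivity
end

section
/- Barbalat-type lemma: if V : [0,∞) → ℝ is differentiable, V is bounded below, V' ≤ 0, and V' is uniformly continuous, then V'(t) → 0 as t → ∞. -/
open Set Filter

/-- Barbalat-type lemma: if `V` is differentiable on `[0,∞)`, bounded below,
with `V' ≤ 0` uniformly continuous, then `V'(t) → 0` as `t → ∞`. -/
theorem barbalat (V V' : ℝ → ℝ)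
    (hV : ∀ t ∈ Ici (0:ℝ), HasDerivAt V (V' t) t)
    (hlb : ∃ m, ∀ t ∈ Ici (0:ℝ), m ≤ V t)
    (hneg : ∀ t ∈ Ici (0:ℝ), V' t ≤ 0)
    (huc : UniformContinuousOn V' (Ici (0:ℝ))) :
    Tendsto V' atTop (nhds 0) := by
  obtain ⟨m, hm⟩ := hlb
  have hcont : ContinuousOn V (Ici (0:ℝ)) := fun t ht =>
    (hV t ht).continuousAt.continuousWithinAt
  have hanti : AntitoneOn V (Ici (0:ℝ)) := by
    apply antitoneOn_of_deriv_nonpos (convex_Ici 0) hcont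
    · intro x hx
      rw [interior_Ici] at hx
      exact ((hV x (le_of_lt hx : (0:ℝ) ≤ x)).differentiableAt).differentiableWithinAt
    · intro x hx
      rw [interior_Ici] at hx
      rw [(hV x (le_of_lt hx : (0:ℝ) ≤ x)).deriv]
      exact hneg x (le_of_lt hx : (0:ℝ) ≤ x)
  by_contra h
  rw [Metric.tendsto_atTop] at h
  push_neg at h
  obtain ⟨ε, hε, hfreq⟩ := h
  rw [Metric.uniformContinuousOn_iff] at huc
  obtain ⟨δ, hδ, hucδ⟩ := huc (ε/2) (by linarith)
  set c₀ := ε/2 * (δ/2) with hc₀def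
  have hc₀ : 0 < c₀ := by positivity
  have key : ∀ s : ℝ, 0 ≤ s → V' s ≤ -ε → V (s + δ/2) ≤ V s - c₀ := by
    intro s hs hVs
    have hlt : s < s + δ/2 := by linarith
    have hcont' : ContinuousOn V (Icc s (s + δ/2)) :=
      hcont.mono (fun x hx => le_trans hs hx.1)
    have hderiv : ∀ x ∈ Ioo s (s + δ/2), HasDerivAt V (V' x) x := fun x hx =>
      hV x (le_trans hs hx.1.le)
    obtain ⟨c, hc, hceq⟩ := exists_hasDerivAt_eq_slope V V' hlt hcont' hderiv
    have hc0 : (0:ℝ) ≤ c := le_trans hs hc.1.le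
    have hdist : dist c s < δ := by
      rw [Real.dist_eq, abs_of_nonneg (by linarith [hc.1.le])]
      linarith [hc.2]
    have hclose := hucδ c hc0 s hs hdist
    rw [Real.dist_eq] at hclose
    have hVc : V' c ≤ -(ε/2) := by
      obtain ⟨h1, h2⟩ := abs_lt.mp hclose
      linarith
    rw [show s + δ/2 - s = δ/2 by ring] at hceq
    have hslope : (V (s + δ/2) - V s) / (δ/2) ≤ -(ε/2) := by
      rw [← hceq]; exact hVc
    have h2 := (div_le_iff₀ (by linarith : (0:ℝ) < δ/2)).mp hslope
    rw [hc₀def]; nlinarith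
  have ind : ∀ n : ℕ, ∃ t, 0 ≤ t ∧ V t ≤ V 0 - n * c₀ := by
    intro n
    induction n with
    | zero => exact ⟨0, le_refl 0, by simp⟩
    | succ n ih =>
      obtain ⟨t, ht, hVt⟩ := ih
      obtain ⟨s, hst, hVs'⟩ := hfreq t
      have hs0 : 0 ≤ s := le_trans ht hst
      have hVsneg : V' s ≤ -ε := by
        have hnp := hneg s hs0
        rw [Real.dist_eq, sub_zero, abs_of_nonpos hnp] at hVs'
        linarith
      refine ⟨s + δ/2, by linarith, ?_⟩
      have h1 := key s hs0 hVsneg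
      have h2 : V s ≤ V t := hanti ht hs0 hst
      push_cast
      linarith
  obtain ⟨n, hn⟩ := exists_nat_gt ((V 0 - m) / c₀)
  obtain ⟨t, ht, hVt⟩ := ind n
  have hmt := hm t ht
  have h1 : (n:ℝ) * c₀ ≤ V 0 - m := by linarith
  have h2 : (n:ℝ) ≤ (V 0 - m) / c₀ := (le_div_iff₀ hc₀).mpr h1
  linarith
end
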